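/- Let M be an s×s real symmetric matrix, U an s×t real matrix, W a t×t real matrix such that range(Uᵀ) ⊆ range(Wᵀ). Then for every real λ, the matrix [[M, 0],[0, 0]] + λ·[[U·Uᵀ, U·Wᵀ],[W·Uᵀ, W·Wᵀ]] is congruent, via an invertible matrix independent of λ, to [[M, 0],[0, λ·W·Wᵀ]]. In particular, for all λ ≤ 0 the number of strictly positive eigenvalues of [[M,0],[0,0]] + λ[[UUᵀ, UWᵀ],[WUᵀ, WWᵀ]] equals the number of strictly positive eigenvalues of M plus that of λWWᵀ. -/

import Mathlib

open Matrix Module Submodule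

noncomputable def posIdx {n : Type*} [Fintype n] [DecidableEq n] (A : Matrix n n ℝ) : ℕ :=
  if h : A.IsHermitian then Fintype.card {i // 0 < h.eigenvalues i} else 0

section Aux

variable {n : Type*} [Fintype n] [DecidableEq n]

def PosOn (A : Matrix n n ℝ) (P : Submodule ℝ (n → ℝ)) : Prop :=
  ∀ x ∈ P, x ≠ 0 → 0 < x ⬝ᵥ A *ᵥ x

def NonposOn (A : Matrix n n ℝ) (N : Submodule ℝ (n → ℝ)) : Prop :=
  ∀ x ∈ N, x ⬝ᵥ A *ᵥ x ≤ 0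

lemma sum_dot {ι : Type*} [Fintype ι] (f : ι → n → ℝ) (w : n → ℝ) :
    (∑ i, f i) ⬝ᵥ w = ∑ i, f i ⬝ᵥ w :=
  map_sum (AddMonoidHom.mk' (fun v => v ⬝ᵥ w) fun a b => add_dotProduct a b w) f Finset.univ

lemma dot_sum {ι : Type*} [Fintype ι] (w : n → ℝ) (f : ι → n → ℝ) :
    w ⬝ᵥ (∑ i, f i) = ∑ i, w ⬝ᵥ f i :=
  map_sum (AddMonoidHom.mk' (fun v => w ⬝ᵥ v) fun a b => dotProduct_add w a b) f Finset.univ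

lemma sum_dot_sum {ι κ : Type*} [Fintype ι] [Fintype κ] (f : ι → n → ℝ) (g : κ → n → ℝ) :
    (∑ i, f i) ⬝ᵥ (∑ j, g j) = ∑ i, ∑ j, f i ⬝ᵥ g j := by
  rw [sum_dot]; exact Finset.sum_congr rfl fun i _ => dot_sum _ _

lemma quad_sum {A : Matrix n n ℝ} {ι : Type*} [Fintype ι] [DecidableEq ι]
    (v : ι → n → ℝ) (μ : ι → ℝ)
    (hdot : ∀ i j, v i ⬝ᵥ v j = if i = j then 1 else 0)
    (hAv : ∀ j, A *ᵥ v j = μ j • v j) (c : ι → ℝ) :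
    (∑ i, c i • v i) ⬝ᵥ A *ᵥ (∑ i, c i • v i) = ∑ i, μ i * c i ^ 2 := by
  have h1 : A *ᵥ (∑ i, c i • v i) = ∑ j, (c j * μ j) • v j := by
    calc A *ᵥ (∑ i, c i • v i) = A.mulVecLin (∑ i, c i • v i) := rfl
    _ = ∑ j, c j • A.mulVecLin (v j) := by rw [map_sum]; simp
    _ = ∑ j, (c j * μ j) • v j := by
        simp only [mulVecLin_apply, hAv, smul_smul]
  rw [h1, sum_dot_sum]
  simp only [smul_dotProduct, dotProduct_smul, hdot, smul_eq_mul, mul_ite, mul_one, mul_zero]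
  simp only [Finset.sum_ite_eq, Finset.mem_univ, if_true]
  exact Finset.sum_congr rfl fun i _ => by ring

set_option linter.unusedSectionVars false

lemma exists_inertia {A : Matrix n n ℝ} (hA : A.IsHermitian) :
    ∃ P N : Submodule ℝ (n → ℝ), PosOn A P ∧ NonposOn A N ∧
      finrank ℝ P = posIdx A ∧ finrank ℝ P + finrank ℝ N = Fintype.card n := by
  classical
  set μ := hA.eigenvalues with hμ
  set v : n → n → ℝ := fun i => ⇑(hA.eigenvectorBasis i) with hv
  have hAv : ∀ j, A *ᵥ v j = μ j • v j := fun j => hA.mulVec_eigenvectorBasis j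
  have hdot : ∀ i j, v i ⬝ᵥ v j = if i = j then 1 else 0 := by
    intro i j
    have := orthonormal_iff_ite.mp (hA.eigenvectorBasis).orthonormal i j
    simpa [PiLp.inner_apply, RCLike.inner_apply, dotProduct, hv, mul_comm] using this
  have hli : LinearIndependent ℝ v := by
    rw [Fintype.linearIndependent_iff]
    intro c hc j
    have h0 : v j ⬝ᵥ (∑ i, c i • v i) = c j := by
      rw [dot_sum]
      simp [dotProduct_smul, hdot, Finset.sum_ite_eq']
    rw [hc] at h0; simpa using h0.symm
  have hcomp : ∀ (p : n → Prop) (i j : {i // p i}),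
      (v ∘ Subtype.val) i ⬝ᵥ (v ∘ Subtype.val) j = if i = j then 1 else 0 := by
    intro p i j
    simp only [Function.comp_apply, hdot, Subtype.val_inj]
  refine ⟨span ℝ (Set.range (v ∘ (Subtype.val : {i // 0 < μ i} → n))),
    span ℝ (Set.range (v ∘ (Subtype.val : {i // ¬ 0 < μ i} → n))), ?_, ?_, ?_, ?_⟩
  · intro x hx hx0
    obtain ⟨c, rfl⟩ := (mem_span_range_iff_exists_fun ℝ).mp hx
    rw [quad_sum (v ∘ (Subtype.val : {i // 0 < μ i} → n)) (fun i => μ i)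
      (hcomp _) (fun j => hAv j) c]
    apply Finset.sum_pos'
    · intro i _; exact mul_nonneg (le_of_lt i.2) (sq_nonneg _)
    · have : ∃ i, c i ≠ 0 := by
        by_contra h; push_neg at h
        exact hx0 (by simp [h])
      obtain ⟨i, hi⟩ := this
      exact ⟨i, Finset.mem_univ i, mul_pos i.2 (pow_two_pos_of_ne_zero hi)⟩
  · intro x hx
    obtain ⟨c, rfl⟩ := (mem_span_range_iff_exists_fun ℝ).mp hx
    rw [quad_sum (v ∘ (Subtype.val : {i // ¬ 0 < μ i} → n)) (fun i => μ i)
      (hcomp _) (fun j => hAv j) c]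
    exact Finset.sum_nonpos fun i _ => by nlinarith [sq_nonneg (c i), le_of_not_gt i.2]
  · rw [finrank_span_eq_card (hli.comp _ Subtype.val_injective)]
    rw [posIdx, dif_pos hA]
  · rw [finrank_span_eq_card (hli.comp _ Subtype.val_injective),
      finrank_span_eq_card (hli.comp _ Subtype.val_injective)]
    have := Fintype.card_congr (Equiv.sumCompl (fun i => 0 < μ i))
    rw [Fintype.card_sum] at this
    exact this

lemma PosOn.nonneg {A : Matrix n n ℝ} {P : Submodule ℝ (n → ℝ)} (hP : PosOn A P)
    {y : n → ℝ} (hy : y ∈ P) : 0 ≤ y ⬝ᵥ A *ᵥ y := by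
  rcases eq_or_ne y 0 with rfl | h
  · simp
  · exact (hP y hy h).le

lemma finrank_add_finrank_le {A : Matrix n n ℝ} {P N : Submodule ℝ (n → ℝ)}
    (hP : PosOn A P) (hN : NonposOn A N) :
    finrank ℝ P + finrank ℝ N ≤ Fintype.card n := by
  have hdisj : P ⊓ N = ⊥ := by
    rw [eq_bot_iff]
    intro x hx
    rw [Submodule.mem_inf] at hx
    rw [Submodule.mem_bot]
    by_contra hx0
    exact absurd (hN x hx.2) (not_le.mpr (hP x hx.1 hx0))
  have h := Submodule.finrank_sup_add_finrank_inf_eq P N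
  rw [hdisj, finrank_bot, add_zero] at h
  rw [← h]
  have := Submodule.finrank_le (P ⊔ N)
  rwa [Module.finrank_pi] at this

lemma posIdx_eq_of {A : Matrix n n ℝ} (hA : A.IsHermitian) {P N : Submodule ℝ (n → ℝ)}
    (hP : PosOn A P) (hN : NonposOn A N)
    (hsum : finrank ℝ P + finrank ℝ N = Fintype.card n) :
    posIdx A = finrank ℝ P := by
  obtain ⟨P₀, N₀, hP₀, hN₀, hr₀, hs₀⟩ := exists_inertia hA
  have h1 := finrank_add_finrank_le hP hN₀
  have h2 := finrank_add_finrank_le hP₀ hN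
  omega

lemma quad_congr (A S : Matrix n n ℝ) (x : n → ℝ) :
    x ⬝ᵥ (Sᵀ * A * S) *ᵥ x = (S *ᵥ x) ⬝ᵥ A *ᵥ (S *ᵥ x) := by
  rw [← Matrix.mulVec_mulVec, ← Matrix.mulVec_mulVec, Matrix.dotProduct_mulVec,
    Matrix.vecMul_transpose]

lemma posIdx_congr {A : Matrix n n ℝ} (hA : A.IsHermitian) {S : Matrix n n ℝ}
    (hS : IsUnit S) : posIdx (Sᵀ * A * S) = posIdx A := by
  obtain ⟨P, N, hP, hN, hr, hsum⟩ := exists_inertia hA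
  have hinv : Invertible S := hS.nonempty_invertible.some
  let e : (n → ℝ) ≃ₗ[ℝ] (n → ℝ) :=
    LinearEquiv.ofLinear S.mulVecLin (⅟S).mulVecLin
      (by rw [← Matrix.mulVecLin_mul, mul_invOf_self, Matrix.mulVecLin_one])
      (by rw [← Matrix.mulVecLin_mul, invOf_mul_self, Matrix.mulVecLin_one])
  have hB : (Sᵀ * A * S).IsHermitian := by
    have h := Matrix.isHermitian_conjTranspose_mul_mul S hA
    rwa [Matrix.conjTranspose_eq_transpose_of_trivial] at h
  have hfr : ∀ Q : Submodule ℝ (n → ℝ), finrank ℝ (Q.map e.symm.toLinearMap) = finrank ℝ Q :=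
    fun Q => (Submodule.equivMapOfInjective e.symm.toLinearMap e.symm.injective Q).finrank_eq.symm
  have hmem : ∀ (Q : Submodule ℝ (n → ℝ)) (x : n → ℝ),
      x ∈ Q.map e.symm.toLinearMap ↔ S *ᵥ x ∈ Q := by
    intro Q x
    constructor
    · rintro ⟨y, hy, rfl⟩
      show S *ᵥ (e.symm.toLinearMap y) ∈ Q
      rw [show S *ᵥ (e.symm.toLinearMap y) = e (e.symm y) from rfl, e.apply_symm_apply]
      exact hy
    · intro h
      exact ⟨S *ᵥ x, h, by
        rw [show e.symm.toLinearMap (S *ᵥ x) = e.symm (e x) from rfl, e.symm_apply_apply]⟩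
  have hP' : PosOn (Sᵀ * A * S) (P.map e.symm.toLinearMap) := by
    intro x hx hx0
    rw [quad_congr]
    exact hP _ ((hmem P x).mp hx) (by
      have : e x ≠ 0 := e.map_ne_zero_iff.mpr hx0
      exact this)
  have hN' : NonposOn (Sᵀ * A * S) (N.map e.symm.toLinearMap) := by
    intro x hx
    rw [quad_congr]
    exact hN _ ((hmem N x).mp hx)
  have := posIdx_eq_of hB hP' hN' (by rw [hfr, hfr]; exact hsum)
  rw [this, hfr, hr]

lemma finrank_submodule_prod {V W : Type*} [AddCommGroup V] [Module ℝ V]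
    [AddCommGroup W] [Module ℝ W] [FiniteDimensional ℝ V] [FiniteDimensional ℝ W]
    (p : Submodule ℝ V) (q : Submodule ℝ W) :
    finrank ℝ (p.prod q) = finrank ℝ p + finrank ℝ q := by
  rw [LinearMap.prod_eq_sup_map]
  have hinf : (p.map (LinearMap.inl ℝ V W)) ⊓ (q.map (LinearMap.inr ℝ V W)) = ⊥ := by
    rw [eq_bot_iff]
    rintro ⟨a, b⟩ hx
    rw [Submodule.mem_inf] at hx
    obtain ⟨⟨a', _, h1⟩, ⟨b', _, h2⟩⟩ := hx
    rw [Submodule.mem_bot]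
    simp only [LinearMap.coe_inl, Prod.mk.injEq] at h1
    simp only [LinearMap.coe_inr, Prod.mk.injEq] at h2
    simp [Prod.ext_iff, ← h1.2, ← h2.1]
  have h := Submodule.finrank_sup_add_finrank_inf_eq
    (p.map (LinearMap.inl ℝ V W)) (q.map (LinearMap.inr ℝ V W))
  rw [hinf, finrank_bot, add_zero] at h
  have e1 : finrank ℝ (p.map (LinearMap.inl ℝ V W)) = finrank ℝ p :=
    (Submodule.equivMapOfInjective (LinearMap.inl ℝ V W) LinearMap.inl_injective p).finrank_eq.symm
  have e2 : finrank ℝ (q.map (LinearMap.inr ℝ V W)) = finrank ℝ q :=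
    (Submodule.equivMapOfInjective (LinearMap.inr ℝ V W) LinearMap.inr_injective q).finrank_eq.symm
  rw [h, e1, e2]

lemma posIdx_fromBlocks {m : Type*} [Fintype m] [DecidableEq m]
    {A : Matrix n n ℝ} {B : Matrix m m ℝ} (hA : A.IsHermitian) (hB : B.IsHermitian) :
    posIdx (Matrix.fromBlocks A 0 0 B) = posIdx A + posIdx B := by
  obtain ⟨P₁, N₁, hP₁, hN₁, hr₁, hs₁⟩ := exists_inertia hA
  obtain ⟨P₂, N₂, hP₂, hN₂, hr₂, hs₂⟩ := exists_inertia hB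
  have hAt : Aᵀ = A := by rw [← Matrix.conjTranspose_eq_transpose_of_trivial]; exact hA.eq
  have hBt : Bᵀ = B := by rw [← Matrix.conjTranspose_eq_transpose_of_trivial]; exact hB.eq
  have hH : (Matrix.fromBlocks A 0 0 B).IsHermitian := by
    simp [Matrix.IsHermitian, Matrix.conjTranspose_eq_transpose_of_trivial,
      Matrix.fromBlocks_transpose, hAt, hBt]
  let e := LinearEquiv.sumArrowLequivProdArrow n m ℝ ℝ
  have hquad : ∀ x : (n ⊕ m) → ℝ, x ⬝ᵥ (Matrix.fromBlocks A 0 0 B) *ᵥ x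
      = (x ∘ Sum.inl) ⬝ᵥ A *ᵥ (x ∘ Sum.inl) + (x ∘ Sum.inr) ⬝ᵥ B *ᵥ (x ∘ Sum.inr) := by
    intro x
    have hx : x = Sum.elim (x ∘ Sum.inl) (x ∘ Sum.inr) := by ext (i | i) <;> rfl
    conv_lhs => rw [hx]
    rw [Matrix.fromBlocks_mulVec, sumElim_dotProduct_sumElim]
    simp
  have hfr : ∀ Q : Submodule ℝ ((n → ℝ) × (m → ℝ)),
      finrank ℝ (Q.map e.symm.toLinearMap) = finrank ℝ Q :=
    fun Q => (Submodule.equivMapOfInjective e.symm.toLinearMap e.symm.injective Q).finrank_eq.symm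
  have hmem : ∀ (Q₁ : Submodule ℝ (n → ℝ)) (Q₂ : Submodule ℝ (m → ℝ)) (x : (n ⊕ m) → ℝ),
      x ∈ (Q₁.prod Q₂).map e.symm.toLinearMap ↔ (x ∘ Sum.inl) ∈ Q₁ ∧ (x ∘ Sum.inr) ∈ Q₂ := by
    intro Q₁ Q₂ x
    constructor
    · rintro ⟨y, hy, rfl⟩
      exact ⟨hy.1, hy.2⟩
    · intro ⟨h1, h2⟩
      refine ⟨(x ∘ Sum.inl, x ∘ Sum.inr), Submodule.mem_prod.mpr ⟨h1, h2⟩, ?_⟩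
      ext (i | i) <;> rfl
  have hzero : ∀ x : (n ⊕ m) → ℝ, x ≠ 0 → (x ∘ Sum.inl) ≠ 0 ∨ (x ∘ Sum.inr) ≠ 0 := by
    intro x hx0
    by_contra h
    push_neg at h
    apply hx0
    ext (i | i)
    · exact congrFun h.1 i
    · exact congrFun h.2 i
  have hP' : PosOn (Matrix.fromBlocks A 0 0 B) ((P₁.prod P₂).map e.symm.toLinearMap) := by
    intro x hx hx0
    rw [hquad]
    obtain ⟨h1, h2⟩ := (hmem P₁ P₂ x).mp hx
    rcases hzero x hx0 with h | h
    · exact add_pos_of_pos_of_nonneg (hP₁ _ h1 h) (hP₂.nonneg h2)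
    · exact add_pos_of_nonneg_of_pos (hP₁.nonneg h1) (hP₂ _ h2 h)
  have hN' : NonposOn (Matrix.fromBlocks A 0 0 B) ((N₁.prod N₂).map e.symm.toLinearMap) := by
    intro x hx
    rw [hquad]
    obtain ⟨h1, h2⟩ := (hmem N₁ N₂ x).mp hx
    exact add_nonpos (hN₁ _ h1) (hN₂ _ h2)
  have := posIdx_eq_of hH hP' hN' (by
    rw [hfr, hfr, finrank_submodule_prod, finrank_submodule_prod, Fintype.card_sum]
    omega)
  rw [this, hfr, finrank_submodule_prod, hr₁, hr₂]

end Aux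
/-- If `range Uᵀ ⊆ range Wᵀ`, then `[[M,0],[0,0]] + λ [[U Uᵀ, U Wᵀ],[W Uᵀ, W Wᵀ]]` is
congruent, via an invertible matrix independent of `λ`, to `diag(M, λ W Wᵀ)`; consequently
for `λ ≤ 0` its number of strictly positive eigenvalues is `μ₊(M) + μ₊(λ W Wᵀ)`. -/
theorem bordered_congruence_of_range_le {s t : ℕ}
    (M : Matrix (Fin s) (Fin s) ℝ) (hM : M.IsSymm)
    (U : Matrix (Fin s) (Fin t) ℝ) (W : Matrix (Fin t) (Fin t) ℝ)
    (hUW : LinearMap.range Uᵀ.mulVecLin ≤ LinearMap.range Wᵀ.mulVecLin) :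
    (∃ S : Matrix (Fin s ⊕ Fin t) (Fin s ⊕ Fin t) ℝ, IsUnit S ∧
      ∀ lam : ℝ,
        Matrix.fromBlocks M 0 0 0 +
          lam • Matrix.fromBlocks (U * Uᵀ) (U * Wᵀ) (W * Uᵀ) (W * Wᵀ) =
        Sᵀ * Matrix.fromBlocks M 0 0 (lam • (W * Wᵀ)) * S) ∧
    ∀ lam : ℝ, lam ≤ 0 →
      posIdx (Matrix.fromBlocks M 0 0 0 +
          lam • Matrix.fromBlocks (U * Uᵀ) (U * Wᵀ) (W * Uᵀ) (W * Wᵀ)) =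
        posIdx M + posIdx (lam • (W * Wᵀ)) := by
  classical
  -- extract the factorization `Uᵀ = Wᵀ * Y`
  have hcol : ∀ j : Fin s, ∃ z, Wᵀ *ᵥ z = Uᵀ *ᵥ Pi.single j 1 := fun j =>
    hUW (LinearMap.mem_range_self _ (Pi.single j 1))
  choose y hy using hcol
  set Y : Matrix (Fin t) (Fin s) ℝ := Matrix.of fun i j => y j i with hYdef
  have hY : Wᵀ * Y = Uᵀ := by
    ext i j
    have h := congrFun (hy j) i
    simp only [Matrix.mulVec_single, mul_one] at h
    simpa [Matrix.mul_apply, Matrix.mulVec, dotProduct, hYdef] using h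
  have hU : U = Yᵀ * W := by
    have h := congrArg Matrix.transpose hY
    rw [Matrix.transpose_mul, Matrix.transpose_transpose, Matrix.transpose_transpose] at h
    exact h.symm
  set S : Matrix (Fin s ⊕ Fin t) (Fin s ⊕ Fin t) ℝ := Matrix.fromBlocks 1 0 Y 1 with hSdef
  set T : Matrix (Fin s ⊕ Fin t) (Fin s ⊕ Fin t) ℝ := Matrix.fromBlocks 1 0 (-Y) 1 with hTdef
  have hST : S * T = 1 := by
    rw [hSdef, hTdef, Matrix.fromBlocks_multiply]
    simp [Matrix.fromBlocks_one]
  have hTS : T * S = 1 := by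
    rw [hSdef, hTdef, Matrix.fromBlocks_multiply]
    simp [Matrix.fromBlocks_one]
  have hSunit : IsUnit S := ⟨⟨S, T, hST, hTS⟩, rfl⟩
  have hcong : ∀ lam : ℝ,
      Matrix.fromBlocks M 0 0 0 +
        lam • Matrix.fromBlocks (U * Uᵀ) (U * Wᵀ) (W * Uᵀ) (W * Wᵀ) =
      Sᵀ * Matrix.fromBlocks M 0 0 (lam • (W * Wᵀ)) * S := by
    intro lam
    rw [hSdef, Matrix.fromBlocks_transpose, Matrix.transpose_one, Matrix.transpose_zero,
      Matrix.fromBlocks_multiply, Matrix.fromBlocks_multiply,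
      Matrix.fromBlocks_smul, Matrix.fromBlocks_add, hU]
    simp [Matrix.transpose_mul, Matrix.transpose_transpose, Matrix.mul_assoc,
        Matrix.mul_smul, Matrix.smul_mul]
  refine ⟨⟨S, hSunit, hcong⟩, ?_⟩
  intro lam _
  have hM' : M.IsHermitian := by
    rw [Matrix.IsHermitian, Matrix.conjTranspose_eq_transpose_of_trivial]; exact hM
  have hWW : (lam • (W * Wᵀ)).IsHermitian := by
    rw [Matrix.IsHermitian, Matrix.conjTranspose_eq_transpose_of_trivial,
      Matrix.transpose_smul, Matrix.transpose_mul, Matrix.transpose_transpose]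
  have hD : (Matrix.fromBlocks M 0 0 (lam • (W * Wᵀ))).IsHermitian := by
    rw [Matrix.IsHermitian, Matrix.conjTranspose_eq_transpose_of_trivial,
      Matrix.fromBlocks_transpose, Matrix.transpose_zero, Matrix.transpose_zero]
    rw [Matrix.IsHermitian, Matrix.conjTranspose_eq_transpose_of_trivial] at hM' hWW
    rw [hM', hWW]
  rw [hcong lam, posIdx_congr hD hSunit, posIdx_fromBlocks hM' hWW]
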